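/- Let C be a category with finite limits which is cartesian closed and admits a subobject classifier, and let G be a comonad on C whose underlying endofunctor preserves finite limits. Then the category of G-coalgebras admits a subobject classifier. -/

import Mathlib

open CategoryTheory CategoryTheory.Limits

universe v u

/-- A monomorphism `truth : ⊤_ C ⟶ Ω` out of the terminal object is a subobject classifier
if every monomorphism `m : A ⟶ B` arises as the pullback of `truth` along a unique
classifying morphism `B ⟶ Ω`. -/
structure IsClassifier {C : Type u} [Category.{v} C] [HasTerminal C]
    {Ω : C} (truth : ⊤_ C ⟶ Ω) : Prop where
  mono : Mono truth
  classifies : ∀ {A B : C} (m : A ⟶ B), Mono m →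
    ∃! χ : B ⟶ Ω, IsPullback (terminal.from A) m truth χ

/-- The category of coalgebras for a comonad whose underlying endofunctor preserves finite
limits has finite limits, created by the forgetful functor. -/
theorem coalgebraHasFiniteLimits {C : Type u} [Category.{v} C] [HasFiniteLimits C]
    (G : Comonad C) [PreservesFiniteLimits G.toFunctor] :
    HasFiniteLimits (Comonad.Coalgebra G) := by
  constructor
  intro J _ _
  haveI : PreservesLimitsOfShape J G.toFunctor := inferInstance
  exact hasLimitsOfShape_of_hasLimitsOfShape_createsLimitsOfShape (Comonad.forget G)

section Aux
variable {C : Type u} [Category.{v} C]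

lemma isPullback_of_comp_mono' {P X Y Z Z' : C} {fst : P ⟶ X} {snd : P ⟶ Y} {f : X ⟶ Z}
    {g : Y ⟶ Z} (k : Z ⟶ Z') [Mono k] (comm : fst ≫ f = snd ≫ g)
    (hp : IsPullback fst snd (f ≫ k) (g ≫ k)) : IsPullback fst snd f g :=
  IsPullback.of_isLimit (PullbackCone.IsLimit.mk comm
    (fun s => hp.lift s.fst s.snd (by rw [← Category.assoc, s.condition, Category.assoc]))
    (fun s => hp.lift_fst _ _ _) (fun s => hp.lift_snd _ _ _)
    (fun s m hm₁ hm₂ => hp.hom_ext (by rw [hp.lift_fst]; exact hm₁)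
      (by rw [hp.lift_snd]; exact hm₂)))

lemma isPullback_comp_mono' {P X Y Z Z' : C} {fst : P ⟶ X} {snd : P ⟶ Y} {f : X ⟶ Z}
    {g : Y ⟶ Z} (k : Z ⟶ Z') [Mono k]
    (hp : IsPullback fst snd f g) : IsPullback fst snd (f ≫ k) (g ≫ k) :=
  IsPullback.of_isLimit (PullbackCone.IsLimit.mk (by rw [← Category.assoc, hp.w, Category.assoc])
    (fun s => hp.lift s.fst s.snd (by
      have := s.condition
      rw [← Category.assoc, ← Category.assoc] at this
      exact (cancel_mono k).1 this))
    (fun s => hp.lift_fst _ _ _) (fun s => hp.lift_snd _ _ _)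
    (fun s m hm₁ hm₂ => hp.hom_ext (by rw [hp.lift_fst]; exact hm₁)
      (by rw [hp.lift_snd]; exact hm₂)))

lemma coalgMonoSquare {G : Comonad C} {A B : Comonad.Coalgebra G} (m : A.A ⟶ B.A)
    (hcomm : A.a ≫ G.toFunctor.map m = m ≫ B.a) [Mono m] [Mono (G.toFunctor.map m)] :
    IsPullback A.a m (G.toFunctor.map m) B.a := by
  have h1 : G.ε.app A.A ≫ m = G.toFunctor.map m ≫ G.ε.app B.A := by
    simpa using (G.ε.naturality m).symm
  refine IsPullback.of_isLimit (PullbackCone.IsLimit.mk hcomm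
    (fun s => s.fst ≫ G.ε.app A.A) (fun s => ?_) (fun s => ?_) (fun s l h₁ h₂ => ?_))
  · show (s.fst ≫ G.ε.app A.A) ≫ A.a = s.fst
    rw [← cancel_mono (G.toFunctor.map m)]
    simp only [Category.assoc, hcomm]
    rw [reassoc_of% h1, ← Category.assoc s.fst, s.condition]
    simp only [Category.assoc, Comonad.Coalgebra.counit_assoc]
  · show (s.fst ≫ G.ε.app A.A) ≫ m = s.snd
    rw [Category.assoc, h1, ← Category.assoc, s.condition, Category.assoc, B.counit,
      Category.comp_id]
  · show l = s.fst ≫ G.ε.app A.A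
    rw [← cancel_mono m, h₂, Category.assoc, h1, ← Category.assoc, s.condition, Category.assoc,
      B.counit, Category.comp_id]

def transp {G : Comonad C} (X : Comonad.Coalgebra G) {Y : C} (g : X.A ⟶ Y) :
    X ⟶ G.cofree.obj Y where
  f := X.a ≫ G.toFunctor.map g
  h := by
    show X.a ≫ G.toFunctor.map (X.a ≫ G.toFunctor.map g) = (X.a ≫ G.toFunctor.map g) ≫ G.δ.app Y
    rw [Category.assoc, G.δ.naturality g, Functor.map_comp, ← Category.assoc, ← X.coassoc,
      Category.assoc]
    rfl

end Aux

/-- Let `C` be a category with finite limits which is cartesian closed and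
admits a subobject classifier, and let `G` be a comonad on `C` whose underlying endofunctor
preserves finite limits. Then the category of `G`-coalgebras admits a subobject classifier. -/
theorem coalgebra_hasClassifier {C : Type u} [Category.{v} C] [HasFiniteLimits C]
    [CartesianMonoidalCategory C] [MonoidalClosed C]
    {Ω : C} (truth : ⊤_ C ⟶ Ω) (h : IsClassifier truth)
    (G : Comonad C) [PreservesFiniteLimits G.toFunctor] :
    letI : HasFiniteLimits (Comonad.Coalgebra G) := coalgebraHasFiniteLimits G
    ∃ (Ω' : Comonad.Coalgebra G) (truth' : ⊤_ (Comonad.Coalgebra G) ⟶ Ω'),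
      IsClassifier truth' := by
  letI : HasFiniteLimits (Comonad.Coalgebra G) := coalgebraHasFiniteLimits G
  haveI : Mono truth := h.mono
  haveI : PreservesLimitsOfShape WalkingCospan G.toFunctor := inferInstance
  haveI : G.toFunctor.PreservesMonomorphisms := inferInstance
  haveI : Mono (G.toFunctor.map truth) := inferInstance
  haveI : CreatesLimitsOfShape WalkingCospan (Comonad.forget G) := inferInstance
  haveI : (Comonad.forget G).PreservesMonomorphisms := inferInstance
  have hTT : IsTerminal ((⊤_ (Comonad.Coalgebra G)).A) :=
    (terminalIsTerminal (C := Comonad.Coalgebra G)).isTerminalObj (Comonad.forget G)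
  have hTG : IsTerminal (G.toFunctor.obj (⊤_ C)) :=
    (terminalIsTerminal (C := C)).isTerminalObj G.toFunctor
  -- the classifying map of `G truth`
  obtain ⟨τ, hτ, -⟩ := h.classifies (G.toFunctor.map truth) inferInstance
  -- the key lemma: any classifying map of a subcoalgebra is a `τ`-fixed point
  have keyL : ∀ (X Y : Comonad.Coalgebra G) (m : X.A ⟶ Y.A),
      (X.a ≫ G.toFunctor.map m = m ≫ Y.a) → Mono m → ∀ (φ : Y.A ⟶ Ω),
      IsPullback (terminal.from X.A) m truth φ → Y.a ≫ G.toFunctor.map φ ≫ τ = φ := by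
    intro X Y m hcomm hm φ hφ
    haveI : Mono m := hm
    have s1 : IsPullback X.a m (G.toFunctor.map m) Y.a := coalgMonoSquare m hcomm
    have s2 := hφ.map G.toFunctor
    have big := (s1.paste_horiz s2).paste_horiz hτ
    rw [show (X.a ≫ G.toFunctor.map (terminal.from X.A)) ≫ terminal.from _ =
      terminal.from X.A from Subsingleton.elim _ _] at big
    have := (h.classifies m hm).unique big hφ
    simpa [Category.assoc] using this
  -- the two parallel coalgebra maps on the cofree coalgebra over Ω
  set jbar : G.cofree.obj Ω ⟶ G.cofree.obj Ω := transp (G.cofree.obj Ω) τ with hjbar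
  -- a fixed-point classifying map transposes to a map equalizing jbar and the identity
  have transp_w : ∀ (Y : Comonad.Coalgebra G) (φ : Y.A ⟶ Ω),
      (Y.a ≫ G.toFunctor.map φ ≫ τ = φ) →
      transp Y φ ≫ jbar = transp Y φ ≫ 𝟙 (G.cofree.obj Ω) := by
    intro Y φ hfix
    apply Comonad.Coalgebra.Hom.ext'
    show (Y.a ≫ G.toFunctor.map φ) ≫ (G.δ.app Ω ≫ G.toFunctor.map τ) = _
    have hnat : G.toFunctor.map φ ≫ G.δ.app Ω =
        G.δ.app Y.A ≫ G.toFunctor.map (G.toFunctor.map φ) := by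
      simpa using (G.δ.naturality φ)
    calc (Y.a ≫ G.toFunctor.map φ) ≫ G.δ.app Ω ≫ G.toFunctor.map τ
        = Y.a ≫ (G.toFunctor.map φ ≫ G.δ.app Ω) ≫ G.toFunctor.map τ := by
          simp only [Category.assoc]
      _ = Y.a ≫ G.δ.app Y.A ≫ G.toFunctor.map (G.toFunctor.map φ) ≫ G.toFunctor.map τ := by
          rw [hnat]; simp only [Category.assoc]
      _ = Y.a ≫ G.toFunctor.map Y.a ≫ G.toFunctor.map (G.toFunctor.map φ)
            ≫ G.toFunctor.map τ := by rw [← Comonad.Coalgebra.coassoc_assoc]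
      _ = Y.a ≫ G.toFunctor.map (Y.a ≫ G.toFunctor.map φ ≫ τ) := by
          simp only [Functor.map_comp, Category.assoc]
      _ = Y.a ≫ G.toFunctor.map φ := by rw [hfix]
      _ = @id (Y.A ⟶ G.toFunctor.obj Ω) (transp Y φ ≫ 𝟙 (G.cofree.obj Ω)).f :=
          (Category.comp_id _).symm
  -- the classifying object
  set i : equalizer jbar (𝟙 (G.cofree.obj Ω)) ⟶ G.cofree.obj Ω :=
    equalizer.ι jbar (𝟙 (G.cofree.obj Ω)) with hi
  haveI hMi : Mono i.f := (Comonad.forget G).map_mono i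
  -- data for the truth map of coalgebras
  have t : (⊤_ (Comonad.Coalgebra G)).A ⟶ ⊤_ C := terminal.from _
  have hT : IsPullback (terminal.from ((⊤_ (Comonad.Coalgebra G)).A))
      (𝟙 ((⊤_ (Comonad.Coalgebra G)).A)) truth (t ≫ truth) := by
    have S1 : IsPullback t (𝟙 _) (𝟙 (⊤_ C)) t := IsPullback.of_vert_isIso ⟨by simp⟩
    have S2 : IsPullback (𝟙 (⊤_ C)) (𝟙 (⊤_ C)) truth truth := IsKernelPair.id_of_mono truth
    have base := S1.paste_horiz S2
    rw [Category.comp_id] at base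
    rw [show terminal.from ((⊤_ (Comonad.Coalgebra G)).A) = t from Subsingleton.elim _ _]
    exact base
  have fixT : (⊤_ (Comonad.Coalgebra G)).a ≫ G.toFunctor.map (t ≫ truth) ≫ τ = t ≫ truth :=
    keyL _ _ (𝟙 _) (by simp) inferInstance _ hT
  set truth' : (⊤_ (Comonad.Coalgebra G)) ⟶ equalizer jbar (𝟙 (G.cofree.obj Ω)) :=
    equalizer.lift (transp _ (t ≫ truth)) (transp_w _ _ fixT) with htruth'
  have e1 : truth' ≫ i = transp _ (t ≫ truth) := equalizer.lift_ι _ _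
  -- the iso between the two terminal-ish objects
  set e' : (⊤_ (Comonad.Coalgebra G)).A ⟶ G.toFunctor.obj (⊤_ C) :=
    (⊤_ (Comonad.Coalgebra G)).a ≫ G.toFunctor.map t with he'
  haveI : IsIso e' := ⟨hTT.from _, hTT.hom_ext _ _, hTG.hom_ext _ _⟩
  have hre : truth'.f ≫ i.f = e' ≫ G.toFunctor.map truth := by
    have h' : truth'.f ≫ i.f = (⊤_ (Comonad.Coalgebra G)).a ≫ G.toFunctor.map (t ≫ truth) :=
      congrArg Comonad.Coalgebra.Hom.f e1
    rw [h', he', Category.assoc, ← Functor.map_comp]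
  refine ⟨equalizer jbar (𝟙 (G.cofree.obj Ω)), truth', ⟨?_, ?_⟩⟩
  · exact ⟨fun {Z} g g' _ => Subsingleton.elim g g'⟩
  · intro A B m hm
    haveI : Mono m := hm
    haveI hmf : Mono m.f := (Comonad.forget G).map_mono m
    haveI : Mono (G.toFunctor.map m.f) := inferInstance
    obtain ⟨φ, hφ, hφu⟩ := h.classifies m.f hmf
    have fixB := keyL A B m.f m.h hmf φ hφ
    set χb : B ⟶ equalizer jbar (𝟙 (G.cofree.obj Ω)) :=
      equalizer.lift (transp B φ) (transp_w B φ fixB) with hχb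
    have e2 : χb ≫ i = transp B φ := equalizer.lift_ι _ _
    have comm : terminal.from A ≫ truth' = m ≫ χb := by
      rw [← cancel_mono i, Category.assoc, Category.assoc, e1, e2]
      apply Comonad.Coalgebra.Hom.ext'
      show (terminal.from A).f ≫ ((⊤_ (Comonad.Coalgebra G)).a ≫ G.toFunctor.map (t ≫ truth))
          = m.f ≫ (B.a ≫ G.toFunctor.map φ)
      rw [← Category.assoc, ← (terminal.from A).h, ← Category.assoc, ← m.h,
        Category.assoc, Category.assoc, ← Functor.map_comp, ← Functor.map_comp]
      congr 1
      rw [show (terminal.from A).f ≫ t ≫ truth = ((terminal.from A).f ≫ t) ≫ truth from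
        (Category.assoc _ _ _).symm,
        show (terminal.from A).f ≫ t = terminal.from A.A from Subsingleton.elim _ _, hφ.w]
    refine ⟨χb, ?_, ?_⟩
    · -- the square is a pullback
      have s1 : IsPullback A.a m.f (G.toFunctor.map m.f) B.a := coalgMonoSquare m.f m.h
      have base := s1.paste_horiz (hφ.map G.toFunctor)
      rw [show A.a ≫ G.toFunctor.map (terminal.from A.A) = (terminal.from A).f ≫ e' from
        hTG.hom_ext _ _] at base
      have Stop : IsPullback ((terminal.from A).f) (𝟙 A.A) e' ((terminal.from A).f ≫ e') :=
        IsPullback.of_vert_isIso ⟨by simp⟩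
      have Hc0 := Stop.paste_vert base
      rw [Category.id_comp, show e' ≫ G.toFunctor.map truth = truth'.f ≫ i.f from hre.symm,
        show B.a ≫ G.toFunctor.map φ = χb.f ≫ i.f from
          (show χb.f ≫ i.f = B.a ≫ G.toFunctor.map φ from
            congrArg Comonad.Coalgebra.Hom.f e2).symm] at Hc0
      have commf : (terminal.from A).f ≫ truth'.f = m.f ≫ χb.f :=
        congrArg Comonad.Coalgebra.Hom.f comm
      have Hc := isPullback_of_comp_mono' i.f commf Hc0
      exact IsPullback.of_map (Comonad.forget G) comm Hc
    · -- uniqueness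
      intro χ' hχ'
      rw [← cancel_mono i]
      apply Comonad.Coalgebra.Hom.ext'
      have e2f : χb.f ≫ i.f = B.a ≫ G.toFunctor.map φ := congrArg Comonad.Coalgebra.Hom.f e2
      show χ'.f ≫ i.f = χb.f ≫ i.f
      rw [e2f]
      set ψ : B.A ⟶ G.toFunctor.obj Ω := χ'.f ≫ i.f with hψ
      have hψh : B.a ≫ G.toFunctor.map ψ = ψ ≫ G.δ.app Ω := (χ' ≫ i).h
      have hψeq : ψ ≫ G.δ.app Ω ≫ G.toFunctor.map τ = ψ := by
        have h0 : (χ' ≫ i) ≫ jbar = χ' ≫ i := by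
          rw [Category.assoc, equalizer.condition jbar (𝟙 (G.cofree.obj Ω)), Category.comp_id]
        have h1 : (χ'.f ≫ i.f) ≫ (G.cofree.obj Ω).a ≫ G.toFunctor.map τ = χ'.f ≫ i.f :=
          congrArg Comonad.Coalgebra.Hom.f h0
        exact h1
      have hψτ : ψ ≫ τ = φ := by
        have Hu := hχ'.map (Comonad.forget G)
        have Hu' := isPullback_comp_mono' i.f
          (show IsPullback (terminal.from A).f m.f truth'.f χ'.f from Hu)
        rw [hre] at Hu'
        have Hpeel : IsPullback ((terminal.from A).f ≫ e') m.f (G.toFunctor.map truth) ψ :=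
          Hu'.of_iso (Iso.refl _) (asIso e') (Iso.refl _) (Iso.refl _) (by simp) (by simp)
            (Category.comp_id _) ((Category.comp_id _).trans (Category.id_comp _).symm)
        have big := Hpeel.paste_horiz hτ
        rw [show ((terminal.from A).f ≫ e') ≫ terminal.from (G.toFunctor.obj (⊤_ C)) =
          terminal.from A.A from Subsingleton.elim _ _] at big
        exact hφu (ψ ≫ τ) big
      rw [hψτ.symm]
      show _ = B.a ≫ G.toFunctor.map (ψ ≫ τ)
      rw [Functor.map_comp, ← Category.assoc, hψh, Category.assoc]
      exact hψeq.symm
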